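/- Let there be 3 agents and a finite set M of indivisible chores with additive bi-valued cost functions taking values in {ε, 1} for some 0 ≤ ε < 1, and suppose no two agents have identical cost functions. Suppose every inconsistent item (an item whose cost differs between some two agents) is large only to exactly one agent, and let L_i denote the set of items that are large only to agent i. If |L_i| ≤ 1 for every agent i, then there exists an EFX allocation. -/

import Mathlib

open Finset

lemma split3 {ι : Type*} [DecidableEq ι] (s : Finset ι) (n : Fin 3 → ℕ)
    (h : n 0 + n 1 + n 2 = s.card) :
    ∃ B : Fin 3 → Finset ι, (∀ i, B i ⊆ s) ∧
      (∀ i j, i ≠ j → Disjoint (B i) (B j)) ∧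
      (Finset.univ.biUnion B = s) ∧ (∀ i, (B i).card = n i) := by
  classical
  obtain ⟨B0, hB0s, hB0c⟩ := s.exists_subset_card_eq (n := n 0) (by omega)
  obtain ⟨B1, hB1s, hB1c⟩ := (s \ B0).exists_subset_card_eq (n := n 1) (by
    rw [card_sdiff_of_subset hB0s]; omega)
  have d01 : Disjoint B0 B1 :=
    Finset.disjoint_left.mpr fun a ha h1 => (Finset.mem_sdiff.mp (hB1s h1)).2 ha
  have d02 : Disjoint B0 ((s \ B0) \ B1) :=
    Finset.disjoint_left.mpr fun a ha h2 =>
      (Finset.mem_sdiff.mp (Finset.mem_sdiff.mp h2).1).2 ha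
  have d12 : Disjoint B1 ((s \ B0) \ B1) :=
    Finset.disjoint_left.mpr fun a ha h2 => (Finset.mem_sdiff.mp h2).2 ha
  refine ⟨fun i => if i = 0 then B0 else if i = 1 then B1 else (s \ B0) \ B1, ?_, ?_, ?_, ?_⟩
  · intro i
    fin_cases i <;> simp_all <;>
      first
      | exact hB1s.trans (sdiff_subset)
      | exact (sdiff_subset).trans (sdiff_subset)
      | (intro x hx; simp [hx])
  · intro i j hij
    fin_cases i <;> fin_cases j <;> simp_all <;>
      first
      | exact d01 | exact d02 | exact d12
      | exact d01.symm | exact d02.symm | exact d12.symm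
  · have hu1 : B1 ∪ ((s \ B0) \ B1) = s \ B0 := union_sdiff_of_subset hB1s
    have hu0 : B0 ∪ (s \ B0) = s := union_sdiff_of_subset hB0s
    rw [show (univ : Finset (Fin 3)) = {0, 1, 2} from rfl]
    simp only [biUnion_insert, biUnion_singleton]
    norm_num
    rw [if_neg (show (2:Fin 3) ≠ 0 by decide), if_neg (show (2:Fin 3) ≠ 1 by decide), hu1, hu0]
  · intro i
    have hc2 : ((s \ B0) \ B1).card = n 2 := by
      rw [card_sdiff_of_subset hB1s, card_sdiff_of_subset hB0s]; omega
    fin_cases i <;> simp_all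

lemma add_smalls {ι : Type*} [DecidableEq ι] (c : Fin 3 → ι → ℝ) (ε : ℝ) (hε0 : 0 ≤ ε)
    (S : Finset ι) :
    ∀ X : Fin 3 → Finset ι,
    (∀ e ∈ S, ∀ i : Fin 3, c i e = ε) →
    (∀ i j : Fin 3, i ≠ j → Disjoint (X i) (X j)) →
    (∀ i : Fin 3, Disjoint S (X i)) →
    (∀ i j : Fin 3, ∀ e ∈ X j, ε ≤ c i e) →
    (∀ i j : Fin 3, ∀ e ∈ X j, c j e ≤ c i e) →
    (∀ i j : Fin 3, ∀ e ∈ X i, ∑ f ∈ (X i).erase e, c i f ≤ ∑ f ∈ X j, c i f) →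
    ∃ X' : Fin 3 → Finset ι,
      (∀ i j : Fin 3, i ≠ j → Disjoint (X' i) (X' j)) ∧
      (Finset.univ.biUnion X' = Finset.univ.biUnion X ∪ S) ∧
      (∀ i j : Fin 3, ∀ e ∈ X' i, ∑ f ∈ (X' i).erase e, c i f ≤ ∑ f ∈ X' j, c i f) := by
  classical
  induction S using Finset.induction_on with
  | empty =>
    intro X _ hdisj _ _ _ hEFX
    exact ⟨X, hdisj, by simp, hEFX⟩
  | @insert a s ha ih =>
    intro X hSmall hdisj hSX hlb hmin hEFX
    obtain ⟨i₀, -, hi₀⟩ := Finset.exists_min_image (univ : Finset (Fin 3))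
      (fun i => ∑ f ∈ X i, c i f) ⟨0, mem_univ 0⟩
    have haX : ∀ j, a ∉ X j := fun j =>
      Finset.disjoint_left.mp (hSX j) (mem_insert_self a s)
    have hca : ∀ i, c i a = ε := hSmall a (mem_insert_self a s)
    set X₁ : Fin 3 → Finset ι := Function.update X i₀ (insert a (X i₀)) with hX₁
    have hX₁i₀ : X₁ i₀ = insert a (X i₀) := Function.update_self _ _ _
    have hX₁ne : ∀ j, j ≠ i₀ → X₁ j = X j := fun j hj => Function.update_of_ne hj _ _
    have hmem : ∀ j, ∀ e ∈ X₁ j, e = a ∨ e ∈ X j := by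
      intro j e he
      by_cases hj : j = i₀
      · subst hj; rw [hX₁i₀] at he; exact (Finset.mem_insert.mp he).imp id id
      · right; rwa [hX₁ne j hj] at he
    have hsum₁ : ∀ i, ∑ f ∈ X₁ i₀, c i f = ∑ f ∈ X i₀, c i f + ε := by
      intro i
      rw [hX₁i₀, Finset.sum_insert (haX i₀), hca, add_comm]
    have hdisj₁ : ∀ i j : Fin 3, i ≠ j → Disjoint (X₁ i) (X₁ j) := by
      intro i j hij
      have base := hdisj i j hij
      by_cases hi : i = i₀
      · subst hi
        rw [hX₁i₀, hX₁ne j (Ne.symm hij)]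
        exact Finset.disjoint_insert_left.mpr ⟨haX j, base⟩
      · by_cases hj : j = i₀
        · subst hj
          rw [hX₁i₀, hX₁ne i hi]
          exact Finset.disjoint_insert_right.mpr ⟨haX i, base⟩
        · rw [hX₁ne i hi, hX₁ne j hj]; exact base
    have hSX₁ : ∀ i : Fin 3, Disjoint s (X₁ i) := by
      intro i
      rw [Finset.disjoint_right]
      intro e he hes
      rcases hmem i e he with rfl | heX
      · exact ha hes
      · exact Finset.disjoint_right.mp (hSX i) heX (mem_insert_of_mem hes)
    have hlb₁ : ∀ i j : Fin 3, ∀ e ∈ X₁ j, ε ≤ c i e := by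
      intro i j e he
      rcases hmem j e he with rfl | heX
      · rw [hca i]
      · exact hlb i j e heX
    have hmin₁ : ∀ i j : Fin 3, ∀ e ∈ X₁ j, c j e ≤ c i e := by
      intro i j e he
      rcases hmem j e he with rfl | heX
      · rw [hca i, hca j]
      · exact hmin i j e heX
    have hEFX₁ : ∀ i j : Fin 3, ∀ e ∈ X₁ i, ∑ f ∈ (X₁ i).erase e, c i f ≤ ∑ f ∈ X₁ j, c i f := by
      intro i j e he
      by_cases hi : i = i₀
      · subst hi
        have hL : ∑ f ∈ (X₁ i).erase e, c i f ≤ ∑ f ∈ X i, c i f := by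
          rw [Finset.sum_erase_eq_sub he, hsum₁ i]
          have : ε ≤ c i e := hlb₁ i i e he
          linarith
        by_cases hj : j = i
        · rw [hj, hsum₁ i]
          linarith [hL]
        · rw [hX₁ne j hj]
          refine hL.trans ((hi₀ j (mem_univ j)).trans ?_)
          exact Finset.sum_le_sum (fun f hf => hmin i j f hf)
      · rw [hX₁ne i hi] at he ⊢
        by_cases hj : j = i₀
        · subst hj
          rw [hsum₁ i]
          have := hEFX i j e he
          linarith
        · rw [hX₁ne j hj]
          exact hEFX i j e he
    obtain ⟨X', h1, h2, h3⟩ := ih X₁ (fun e he i => hSmall e (mem_insert_of_mem he) i)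
      hdisj₁ hSX₁ hlb₁ hmin₁ hEFX₁
    refine ⟨X', h1, ?_, h3⟩
    rw [h2]
    have hbU : Finset.univ.biUnion X₁ = insert a (Finset.univ.biUnion X) := by
      ext x
      simp only [mem_biUnion, mem_univ, true_and, mem_insert]
      constructor
      · rintro ⟨i, hi⟩
        rcases hmem i x hi with rfl | hx
        · exact Or.inl rfl
        · exact Or.inr ⟨i, hx⟩
      · rintro (rfl | ⟨i, hi⟩)
        · exact ⟨i₀, by rw [hX₁i₀]; exact mem_insert_self _ _⟩
        · by_cases hi' : i = i₀
          · subst hi'; exact ⟨i, by rw [hX₁i₀]; exact mem_insert_of_mem hi⟩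
          · exact ⟨i, by rwa [hX₁ne i hi']⟩
    rw [hbU]
    ext x
    simp only [mem_union, mem_insert, mem_singleton]
    tauto

lemma key_master {ι : Type*} [DecidableEq ι] (c : Fin 3 → ι → ℝ) (ε : ℝ)
    (hε0 : 0 ≤ ε) (hε1 : ε < 1) (T : Fin 3 → Finset ι) (n : Fin 3 → ℕ)
    (hw : ∀ i j : Fin 3, (0:ℝ) ≤ ∑ e ∈ T j, c i e)
    (ht : ∀ i : Fin 3, (T i).card ≤ 2)
    (H2 : ∀ i j : Fin 3, i ≠ j → n i ≤ n j + 1)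
    (H3 : ∀ i j : Fin 3, i ≠ j → (T i).Nonempty →
      (n i ≤ n j ∨ (1:ℝ) ≤ ∑ e ∈ T j, c i e))
    (H4 : ∀ i j : Fin 3, i ≠ j → (T i).card = 2 →
      (n i + 1 ≤ n j ∨ (n i ≤ n j ∧ (1:ℝ) ≤ ∑ e ∈ T j, c i e))) :
    ∀ i j : Fin 3, i ≠ j →
      ((n i : ℝ) - 1 + ε * (T i).card ≤ (n j : ℝ) + ∑ e ∈ T j, c i e) ∧
      ((T i).Nonempty → (n i : ℝ) + ε * (T i).card - ε ≤ (n j : ℝ) + ∑ e ∈ T j, c i e) := by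
  intro i j hij
  have hw' := hw i j
  have h2' : (n i : ℝ) ≤ (n j : ℝ) + 1 := by exact_mod_cast H2 i j hij
  rcases (by have := ht i; omega : (T i).card = 0 ∨ (T i).card = 1 ∨ (T i).card = 2)
    with h0 | h1 | h2c
  · constructor
    · rw [h0]; push_cast; linarith
    · intro hne
      rw [Finset.card_eq_zero.mp h0] at hne
      exact absurd hne Finset.not_nonempty_empty
  · have hne : (T i).Nonempty := Finset.card_pos.mp (by omega)
    rw [h1]; push_cast
    rcases H3 i j hij hne with h3 | h3
    · have h3' : (n i : ℝ) ≤ (n j : ℝ) := by exact_mod_cast h3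
      exact ⟨by linarith, fun _ => by linarith⟩
    · exact ⟨by linarith, fun _ => by linarith⟩
  · have hne : (T i).Nonempty := Finset.card_pos.mp (by omega)
    rw [h2c]; push_cast
    rcases H4 i j hij h2c with h4 | ⟨h4a, h4b⟩
    · have h4' : (n i : ℝ) + 1 ≤ (n j : ℝ) := by exact_mod_cast h4
      exact ⟨by linarith, fun _ => by linarith⟩
    · have h4' : (n i : ℝ) ≤ (n j : ℝ) := by exact_mod_cast h4a
      exact ⟨by linarith, fun _ => by linarith⟩

lemma base_glue {ι : Type*} [DecidableEq ι] (c : Fin 3 → ι → ℝ) (ε : ℝ) (hε0 : 0 ≤ ε)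
    (hε1 : ε < 1)
    (Big : Finset ι) (T : Fin 3 → Finset ι) (n : Fin 3 → ℕ)
    (hsum : n 0 + n 1 + n 2 = Big.card)
    (hB1 : ∀ i : Fin 3, ∀ e ∈ Big, c i e = 1)
    (hTown : ∀ i : Fin 3, ∀ e ∈ T i, c i e = ε)
    (hTlb : ∀ i j : Fin 3, ∀ e ∈ T j, ε ≤ c i e)
    (hTB : ∀ j : Fin 3, Disjoint (T j) Big)
    (hTT : ∀ i j : Fin 3, i ≠ j → Disjoint (T i) (T j))
    (hnum : ∀ i j : Fin 3, i ≠ j →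
      ((n i : ℝ) - 1 + ε * (T i).card ≤ (n j : ℝ) + ∑ e ∈ T j, c i e) ∧
      ((T i).Nonempty → (n i : ℝ) + ε * (T i).card - ε ≤ (n j : ℝ) + ∑ e ∈ T j, c i e)) :
    ∃ X : Fin 3 → Finset ι,
      (∀ i j : Fin 3, i ≠ j → Disjoint (X i) (X j)) ∧
      (Finset.univ.biUnion X = Big ∪ Finset.univ.biUnion T) ∧
      (∀ i j : Fin 3, ∀ e ∈ X j, c j e ≤ c i e) ∧
      (∀ i j : Fin 3, ∀ e ∈ X i, ∑ f ∈ (X i).erase e, c i f ≤ ∑ f ∈ X j, c i f) := by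
  classical
  obtain ⟨B, hBsub, hBdisj, hBU, hBcard⟩ := split3 Big n hsum
  have hdBT : ∀ i j : Fin 3, Disjoint (B i) (T j) :=
    fun i j => ((hTB j).mono_right (hBsub i)).symm
  refine ⟨fun i => B i ∪ T i, ?_, ?_, ?_, ?_⟩
  · intro i j hij
    rw [Finset.disjoint_union_left, Finset.disjoint_union_right,
      Finset.disjoint_union_right]
    exact ⟨⟨hBdisj i j hij, hdBT i j⟩, ⟨(hdBT j i).symm, hTT i j hij⟩⟩
  · ext x
    simp only [mem_biUnion, mem_univ, true_and, mem_union]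
    constructor
    · rintro ⟨i, h | h⟩
      · exact Or.inl (hBsub i h)
      · exact Or.inr ⟨i, h⟩
    · rintro (h | ⟨i, h⟩)
      · rw [← hBU] at h
        obtain ⟨i, -, hi⟩ := Finset.mem_biUnion.mp h
        exact ⟨i, Or.inl hi⟩
      · exact ⟨i, Or.inr h⟩
  · intro i j e he
    rcases Finset.mem_union.mp he with h | h
    · rw [hB1 j e (hBsub j h), hB1 i e (hBsub j h)]
    · rw [hTown j e h]; exact hTlb i j e h
  · have hBsum : ∀ i j : Fin 3, ∑ f ∈ B j, c i f = (n j : ℝ) := by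
      intro i j
      rw [Finset.sum_congr rfl (fun e he => hB1 i e (hBsub j he)), Finset.sum_const,
        nsmul_eq_mul, mul_one, hBcard j]
    have hTsum : ∀ i : Fin 3, ∑ f ∈ T i, c i f = ε * ((T i).card : ℝ) := by
      intro i
      rw [Finset.sum_congr rfl (fun e he => hTown i e he), Finset.sum_const,
        nsmul_eq_mul, mul_comm]
    have hXsum : ∀ i j : Fin 3, ∑ f ∈ B j ∪ T j, c i f = (n j : ℝ) + ∑ f ∈ T j, c i f := by
      intro i j
      rw [Finset.sum_union (hdBT j j), hBsum i j]
    intro i j e he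
    have hce : ε ≤ c i e := by
      rcases Finset.mem_union.mp he with h | h
      · rw [hB1 i e (hBsub i h)]; linarith
      · exact hTlb i i e h
    rcases eq_or_ne i j with rfl | hij
    · rw [Finset.sum_erase_eq_sub he]
      linarith
    · rw [Finset.sum_erase_eq_sub he, hXsum i i, hTsum i, hXsum i j]
      rcases Finset.mem_union.mp he with h | h
      · rw [hB1 i e (hBsub i h)]
        linarith [(hnum i j hij).1]
      · rw [hTown i e h]
        linarith [(hnum i j hij).2 ⟨e, h⟩]

/-- 3 agents with additive bi-valued cost functions taking values in `{ε, 1}` with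
`0 ≤ ε < 1`, no two agents having identical cost functions.  Suppose every
inconsistent item is large only to exactly one agent, and `L i` is the set of items
large only to agent `i`.  If `|L_i| ≤ 1` for every agent `i`, then there exists an
EFX allocation. -/
theorem stmt_16 {ι : Type*} [DecidableEq ι] (M : Finset ι)
    (c : Fin 3 → ι → ℝ) (ε : ℝ) (hε0 : 0 ≤ ε) (hε1 : ε < 1)
    (hbi : ∀ i, ∀ e ∈ M, c i e = ε ∨ c i e = 1)
    (hdiff : ∀ i j : Fin 3, i ≠ j → ∃ e ∈ M, c i e ≠ c j e)
    (hincons : ∀ e ∈ M, (∃ i j : Fin 3, c i e ≠ c j e) →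
      ∃! i : Fin 3, c i e = 1 ∧ ∀ j, j ≠ i → c j e = ε)
    (L : Fin 3 → Finset ι)
    (hL : ∀ i e, e ∈ L i ↔ e ∈ M ∧ c i e = 1 ∧ ∀ j, j ≠ i → c j e = ε)
    (hsmallL : ∀ i, (L i).card ≤ 1) :
    ∃ X : Fin 3 → Finset ι,
      (∀ i j, i ≠ j → Disjoint (X i) (X j)) ∧
      (Finset.univ.biUnion X = M) ∧
      (∀ i j : Fin 3, ∀ e ∈ X i,
        ∑ f ∈ (X i).erase e, c i f ≤ ∑ f ∈ X j, c i f) := by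
  classical
  have hε1' : ε ≤ 1 := le_of_lt hε1
  have f30 : ∀ x : Fin 3, x = 0 ∨ x = 1 ∨ x = 2 := by decide
  have trich : ∀ k x : Fin 3, x = k ∨ x = k + 1 ∨ x = k + 2 := by decide
  have hne1 : ∀ k : Fin 3, k ≠ k + 1 := by decide
  have hne2 : ∀ k : Fin 3, k ≠ k + 2 := by decide
  have hne12 : ∀ k : Fin 3, k + 1 ≠ k + 2 := by decide
  have add12 : ∀ m : Fin 3, m + 1 + 2 = m := by decide
  have inj2 : ∀ i j : Fin 3, i + 2 = j + 2 → i = j := by decide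
  have hLsub : ∀ i : Fin 3, L i ⊆ M := fun i e he => ((hL i e).1 he).1
  have hLown : ∀ i : Fin 3, ∀ e ∈ L i, c i e = 1 := fun i e he => ((hL i e).1 he).2.1
  have hLoth : ∀ i j : Fin 3, j ≠ i → ∀ e ∈ L i, c j e = ε :=
    fun i j hj e he => ((hL i e).1 he).2.2 j hj
  have hLL : ∀ i j : Fin 3, i ≠ j → Disjoint (L i) (L j) := by
    intro i j hij
    rw [Finset.disjoint_left]
    intro e hei hej
    have h1 : c i e = 1 := hLown i e hei
    have h2 : c i e = ε := hLoth j i hij e hej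
    rw [h1] at h2; linarith
  set Big := M.filter (fun e => ∀ i : Fin 3, c i e = 1) with hBigdef
  set Sm := M.filter (fun e => ∀ i : Fin 3, c i e = ε) with hSmdef
  have hBigM : Big ⊆ M := Finset.filter_subset _ _
  have hSmM : Sm ⊆ M := Finset.filter_subset _ _
  have hBig1 : ∀ i : Fin 3, ∀ e ∈ Big, c i e = 1 := fun i e he => (Finset.mem_filter.mp he).2 i
  have hSmall : ∀ e ∈ Sm, ∀ i : Fin 3, c i e = ε := fun e he i => (Finset.mem_filter.mp he).2 i
  have hlb : ∀ i : Fin 3, ∀ e ∈ M, ε ≤ c i e := by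
    intro i e he
    rcases hbi i e he with h | h
    · rw [h]
    · rw [h]; exact hε1'
  have hBigL : ∀ i : Fin 3, Disjoint (L i) Big := by
    intro i
    rw [Finset.disjoint_left]
    intro e hei heB
    have h1 : c (i+1) e = ε := hLoth i (i+1) (Ne.symm (hne1 i)) e hei
    have h2 : c (i+1) e = 1 := hBig1 (i+1) e heB
    rw [h2] at h1; linarith
  have hSmL : ∀ i : Fin 3, Disjoint (L i) Sm := by
    intro i
    rw [Finset.disjoint_left]
    intro e hei heS
    have h1 : c i e = 1 := hLown i e hei
    have h2 : c i e = ε := hSmall e heS i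
    rw [h1] at h2; linarith
  have hSmBig : Disjoint Sm Big := by
    rw [Finset.disjoint_left]
    intro e heS heB
    have h1 : c 0 e = ε := hSmall e heS 0
    have h2 : c 0 e = 1 := hBig1 0 e heB
    rw [h2] at h1; linarith
  have hLin : ∀ (m : Fin 3) (x : ι), x ∈ L m → x ∈ L 0 ∪ L 1 ∪ L 2 := by
    intro m x hx
    rcases f30 m with rfl | rfl | rfl
    · exact Finset.mem_union_left _ (Finset.mem_union_left _ hx)
    · exact Finset.mem_union_left _ (Finset.mem_union_right _ hx)
    · exact Finset.mem_union_right _ hx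
  have hLex : ∀ x : ι, x ∈ L 0 ∪ L 1 ∪ L 2 → ∃ m : Fin 3, x ∈ L m := by
    intro x hx
    rcases Finset.mem_union.mp hx with h | h
    · rcases Finset.mem_union.mp h with h' | h'
      · exact ⟨0, h'⟩
      · exact ⟨1, h'⟩
    · exact ⟨2, h⟩
  have hcover : ∀ e ∈ M, e ∈ Big ∨ e ∈ Sm ∨ (e ∈ L 0 ∪ L 1 ∪ L 2) := by
    intro e he
    by_cases hall : ∀ j : Fin 3, c j e = c 0 e
    · rcases hbi 0 e he with h | h
      · right; left; exact Finset.mem_filter.mpr ⟨he, fun i => by rw [hall i, h]⟩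
      · left; exact Finset.mem_filter.mpr ⟨he, fun i => by rw [hall i, h]⟩
    · push_neg at hall
      obtain ⟨j, hj⟩ := hall
      obtain ⟨i, hi, -⟩ := hincons e he ⟨j, 0, hj⟩
      right; right
      exact hLin i e ((hL i e).2 ⟨he, hi.1, hi.2⟩)
  have hMdecomp : Big ∪ (L 0 ∪ L 1 ∪ L 2) ∪ Sm = M := by
    apply Finset.Subset.antisymm
    · refine Finset.union_subset (Finset.union_subset hBigM ?_) hSmM
      exact Finset.union_subset (Finset.union_subset (hLsub 0) (hLsub 1)) (hLsub 2)
    · intro x hx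
      rcases hcover x hx with h | h | h
      · exact Finset.mem_union_left _ (Finset.mem_union_left _ h)
      · exact Finset.mem_union_right _ h
      · exact Finset.mem_union_left _ (Finset.mem_union_right _ h)
  set q := Big.card / 3 with hq
  have hbase : ∃ X : Fin 3 → Finset ι,
      (∀ i j : Fin 3, i ≠ j → Disjoint (X i) (X j)) ∧
      (Finset.univ.biUnion X = Big ∪ (L 0 ∪ L 1 ∪ L 2)) ∧
      (∀ i j : Fin 3, ∀ e ∈ X j, c j e ≤ c i e) ∧
      (∀ i j : Fin 3, ∀ e ∈ X i, ∑ f ∈ (X i).erase e, c i f ≤ ∑ f ∈ X j, c i f) := by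
    by_cases hfree : ∃ k : Fin 3, L k = ∅
    · obtain ⟨k, hk⟩ := hfree
      rcases (by omega : Big.card % 3 = 0 ∨ Big.card % 3 = 1 ∨ Big.card % 3 = 2)
        with hr | hr | hr
      · -- r = 0 : equal bundles, L (k+1) goes to k+2 and vice versa
        set T : Fin 3 → Finset ι :=
          fun j => if j = k + 1 then L (k + 2) else if j = k + 2 then L (k + 1) else ∅ with hT
        have hTa : T (k + 1) = L (k + 2) := by rw [hT]; simp
        have hTb : T (k + 2) = L (k + 1) := by rw [hT]; simp [Ne.symm (hne12 k)]
        have hTk : T k = ∅ := by rw [hT]; simp [hne1 k, hne2 k]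
        have hTcases : ∀ j : Fin 3, T j = ∅ ∨ T j = L (k+1) ∨ T j = L (k+2) := by
          intro j
          rcases trich k j with h | h | h
          · exact Or.inl (by rw [h, hTk])
          · exact Or.inr (Or.inr (by rw [h, hTa]))
          · exact Or.inr (Or.inl (by rw [h, hTb]))
        have hTsubM : ∀ j : Fin 3, T j ⊆ M := by
          intro j
          rcases hTcases j with h | h | h <;> rw [h]
          · exact Finset.empty_subset _
          · exact hLsub _
          · exact hLsub _
        have hTown : ∀ i : Fin 3, ∀ e ∈ T i, c i e = ε := by
          intro i e he
          rcases trich k i with h | h | h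
          · rw [h, hTk] at he; exact absurd he (Finset.notMem_empty e)
          · rw [h, hTa] at he; rw [h]; exact hLoth (k+2) (k+1) (hne12 k) e he
          · rw [h, hTb] at he; rw [h]; exact hLoth (k+1) (k+2) (Ne.symm (hne12 k)) e he
        have hTlb : ∀ i j : Fin 3, ∀ e ∈ T j, ε ≤ c i e :=
          fun i j e he => hlb i e (hTsubM j he)
        have hTB : ∀ j : Fin 3, Disjoint (T j) Big := by
          intro j
          rcases hTcases j with h | h | h <;> rw [h]
          · exact Finset.disjoint_empty_left _
          · exact hBigL _
          · exact hBigL _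
        have hTT : ∀ i j : Fin 3, i ≠ j → Disjoint (T i) (T j) := by
          intro i j hij
          have hcase : ∀ x : Fin 3, (x = k ∧ T x = ∅) ∨ (x = k + 1 ∧ T x = L (k+2)) ∨
              (x = k + 2 ∧ T x = L (k+1)) := by
            intro x
            rcases trich k x with h | h | h
            · exact Or.inl ⟨h, by rw [h, hTk]⟩
            · exact Or.inr (Or.inl ⟨h, by rw [h, hTa]⟩)
            · exact Or.inr (Or.inr ⟨h, by rw [h, hTb]⟩)
          rcases hcase i with ⟨hi, hTi⟩ | ⟨hi, hTi⟩ | ⟨hi, hTi⟩ <;>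
            rcases hcase j with ⟨hj, hTj⟩ | ⟨hj, hTj⟩ | ⟨hj, hTj⟩ <;>
            rw [hTi, hTj] <;>
            first
            | exact absurd (hi.trans hj.symm) hij
            | exact Finset.disjoint_empty_left _
            | exact Finset.disjoint_empty_right _
            | exact hLL _ _ (Ne.symm (hne12 k))
            | exact hLL _ _ (hne12 k)
        have hw : ∀ i j : Fin 3, (0:ℝ) ≤ ∑ e ∈ T j, c i e :=
          fun i j => Finset.sum_nonneg fun e he => le_trans hε0 (hTlb i j e he)
        have ht1 : ∀ i : Fin 3, (T i).card ≤ 1 := by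
          intro i
          rcases hTcases i with h | h | h <;> rw [h]
          · simp
          · exact hsmallL _
          · exact hsmallL _
        have hTU : Finset.univ.biUnion T = L 0 ∪ L 1 ∪ L 2 := by
          ext x
          simp only [Finset.mem_biUnion, Finset.mem_univ, true_and]
          constructor
          · rintro ⟨i, hi⟩
            rcases hTcases i with h | h | h <;> rw [h] at hi
            · exact absurd hi (Finset.notMem_empty x)
            · exact hLin _ x hi
            · exact hLin _ x hi
          · intro hx
            obtain ⟨m, hm⟩ := hLex x hx
            rcases trich k m with h | h | h
            · rw [h, hk] at hm; exact absurd hm (Finset.notMem_empty x)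
            · rw [h] at hm; exact ⟨k + 2, by rw [hTb]; exact hm⟩
            · rw [h] at hm; exact ⟨k + 1, by rw [hTa]; exact hm⟩
        obtain ⟨X, hXd, hXu, hXm, hXe⟩ := base_glue c ε hε0 hε1 Big T (fun _ => q)
          (by show q + q + q = Big.card; omega)
          hBig1 hTown hTlb hTB hTT
          (key_master c ε hε0 hε1 T (fun _ => q) hw
            (fun i => le_trans (ht1 i) (by norm_num))
            (fun i j _ => by show q ≤ q + 1; omega)
            (fun i j _ _ => Or.inl (le_refl _))
            (fun i j _ h2 => absurd h2 (by have := ht1 i; omega)))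
        exact ⟨X, hXd, by rw [hXu, hTU], hXm, hXe⟩
      · -- r = 1 : k is heavy, same T as r = 0
        set T : Fin 3 → Finset ι :=
          fun j => if j = k + 1 then L (k + 2) else if j = k + 2 then L (k + 1) else ∅ with hT
        have hTa : T (k + 1) = L (k + 2) := by rw [hT]; simp
        have hTb : T (k + 2) = L (k + 1) := by rw [hT]; simp [Ne.symm (hne12 k)]
        have hTk : T k = ∅ := by rw [hT]; simp [hne1 k, hne2 k]
        have hTcases : ∀ j : Fin 3, T j = ∅ ∨ T j = L (k+1) ∨ T j = L (k+2) := by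
          intro j
          rcases trich k j with h | h | h
          · exact Or.inl (by rw [h, hTk])
          · exact Or.inr (Or.inr (by rw [h, hTa]))
          · exact Or.inr (Or.inl (by rw [h, hTb]))
        have hTsubM : ∀ j : Fin 3, T j ⊆ M := by
          intro j
          rcases hTcases j with h | h | h <;> rw [h]
          · exact Finset.empty_subset _
          · exact hLsub _
          · exact hLsub _
        have hTown : ∀ i : Fin 3, ∀ e ∈ T i, c i e = ε := by
          intro i e he
          rcases trich k i with h | h | h
          · rw [h, hTk] at he; exact absurd he (Finset.notMem_empty e)
          · rw [h, hTa] at he; rw [h]; exact hLoth (k+2) (k+1) (hne12 k) e he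
          · rw [h, hTb] at he; rw [h]; exact hLoth (k+1) (k+2) (Ne.symm (hne12 k)) e he
        have hTlb : ∀ i j : Fin 3, ∀ e ∈ T j, ε ≤ c i e :=
          fun i j e he => hlb i e (hTsubM j he)
        have hTB : ∀ j : Fin 3, Disjoint (T j) Big := by
          intro j
          rcases hTcases j with h | h | h <;> rw [h]
          · exact Finset.disjoint_empty_left _
          · exact hBigL _
          · exact hBigL _
        have hTT : ∀ i j : Fin 3, i ≠ j → Disjoint (T i) (T j) := by
          intro i j hij
          have hcase : ∀ x : Fin 3, (x = k ∧ T x = ∅) ∨ (x = k + 1 ∧ T x = L (k+2)) ∨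
              (x = k + 2 ∧ T x = L (k+1)) := by
            intro x
            rcases trich k x with h | h | h
            · exact Or.inl ⟨h, by rw [h, hTk]⟩
            · exact Or.inr (Or.inl ⟨h, by rw [h, hTa]⟩)
            · exact Or.inr (Or.inr ⟨h, by rw [h, hTb]⟩)
          rcases hcase i with ⟨hi, hTi⟩ | ⟨hi, hTi⟩ | ⟨hi, hTi⟩ <;>
            rcases hcase j with ⟨hj, hTj⟩ | ⟨hj, hTj⟩ | ⟨hj, hTj⟩ <;>
            rw [hTi, hTj] <;>
            first
            | exact absurd (hi.trans hj.symm) hij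
            | exact Finset.disjoint_empty_left _
            | exact Finset.disjoint_empty_right _
            | exact hLL _ _ (Ne.symm (hne12 k))
            | exact hLL _ _ (hne12 k)
        have hw : ∀ i j : Fin 3, (0:ℝ) ≤ ∑ e ∈ T j, c i e :=
          fun i j => Finset.sum_nonneg fun e he => le_trans hε0 (hTlb i j e he)
        have ht1 : ∀ i : Fin 3, (T i).card ≤ 1 := by
          intro i
          rcases hTcases i with h | h | h <;> rw [h]
          · simp
          · exact hsmallL _
          · exact hsmallL _
        have htne : ∀ i : Fin 3, (T i).Nonempty → i ≠ k := by
          intro i hi hik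
          rw [hik, hTk] at hi
          exact absurd hi Finset.not_nonempty_empty
        have hTU : Finset.univ.biUnion T = L 0 ∪ L 1 ∪ L 2 := by
          ext x
          simp only [Finset.mem_biUnion, Finset.mem_univ, true_and]
          constructor
          · rintro ⟨i, hi⟩
            rcases hTcases i with h | h | h <;> rw [h] at hi
            · exact absurd hi (Finset.notMem_empty x)
            · exact hLin _ x hi
            · exact hLin _ x hi
          · intro hx
            obtain ⟨m, hm⟩ := hLex x hx
            rcases trich k m with h | h | h
            · rw [h, hk] at hm; exact absurd hm (Finset.notMem_empty x)
            · rw [h] at hm; exact ⟨k + 2, by rw [hTb]; exact hm⟩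
            · rw [h] at hm; exact ⟨k + 1, by rw [hTa]; exact hm⟩
        set n : Fin 3 → ℕ := fun j => if j = k then q + 1 else q with hn
        have hnk : n k = q + 1 := by rw [hn]; simp
        have hnj : ∀ j : Fin 3, j ≠ k → n j = q := by
          intro j hj; rw [hn]; simp [hj]
        have hsum : n 0 + n 1 + n 2 = Big.card := by
          rcases f30 k with rfl | rfl | rfl
          · rw [hnk, hnj 1 (by decide), hnj 2 (by decide)]; omega
          · rw [hnk, hnj 0 (by decide), hnj 2 (by decide)]; omega
          · rw [hnk, hnj 0 (by decide), hnj 1 (by decide)]; omega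
        have H2 : ∀ i j : Fin 3, i ≠ j → n i ≤ n j + 1 := by
          intro i j hij
          rcases eq_or_ne i k with h | h
          · have hjk : j ≠ k := fun hj => hij (h.trans hj.symm)
            rw [h, hnk, hnj j hjk]
          · rcases eq_or_ne j k with h' | h'
            · rw [hnj i h, h', hnk]; omega
            · rw [hnj i h, hnj j h']; omega
        have H3 : ∀ i j : Fin 3, i ≠ j → (T i).Nonempty →
            (n i ≤ n j ∨ (1:ℝ) ≤ ∑ e ∈ T j, c i e) := by
          intro i j hij hne
          left
          rw [hnj i (htne i hne)]
          rcases eq_or_ne j k with h | h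
          · rw [h, hnk]; omega
          · rw [hnj j h]
        obtain ⟨X, hXd, hXu, hXm, hXe⟩ := base_glue c ε hε0 hε1 Big T n hsum
          hBig1 hTown hTlb hTB hTT
          (key_master c ε hε0 hε1 T n hw
            (fun i => le_trans (ht1 i) (by norm_num))
            H2 H3
            (fun i j _ h2 => absurd h2 (by have := ht1 i; omega)))
        exact ⟨X, hXd, by rw [hXu, hTU], hXm, hXe⟩
      · -- r = 2 : k is light and receives both L sets
        set T : Fin 3 → Finset ι :=
          fun j => if j = k then L (k + 1) ∪ L (k + 2) else ∅ with hT
        have hTk : T k = L (k + 1) ∪ L (k + 2) := by rw [hT]; simp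
        have hTj : ∀ j : Fin 3, j ≠ k → T j = ∅ := by
          intro j hj; rw [hT]; simp [hj]
        have hTsubM : ∀ j : Fin 3, T j ⊆ M := by
          intro j
          rcases eq_or_ne j k with rfl | hj
          · rw [hTk]
            exact Finset.union_subset (hLsub _) (hLsub _)
          · rw [hTj j hj]; exact Finset.empty_subset _
        have hTown : ∀ i : Fin 3, ∀ e ∈ T i, c i e = ε := by
          intro i e he
          rcases eq_or_ne i k with rfl | hi
          · rw [hTk] at he
            rcases Finset.mem_union.mp he with h | h
            · exact hLoth (i+1) i (hne1 i) e h
            · exact hLoth (i+2) i (hne2 i) e h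
          · rw [hTj i hi] at he; exact absurd he (Finset.notMem_empty e)
        have hTlb : ∀ i j : Fin 3, ∀ e ∈ T j, ε ≤ c i e :=
          fun i j e he => hlb i e (hTsubM j he)
        have hTB : ∀ j : Fin 3, Disjoint (T j) Big := by
          intro j
          rcases eq_or_ne j k with rfl | hj
          · rw [hTk]
            exact Finset.disjoint_union_left.mpr ⟨hBigL _, hBigL _⟩
          · rw [hTj j hj]; exact Finset.disjoint_empty_left _
        have hTT : ∀ i j : Fin 3, i ≠ j → Disjoint (T i) (T j) := by
          intro i j hij
          rcases eq_or_ne i k with rfl | hi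
          · rw [hTj j (Ne.symm hij)]; exact Finset.disjoint_empty_right _
          · rw [hTj i hi]; exact Finset.disjoint_empty_left _
        have hw : ∀ i j : Fin 3, (0:ℝ) ≤ ∑ e ∈ T j, c i e :=
          fun i j => Finset.sum_nonneg fun e he => le_trans hε0 (hTlb i j e he)
        have ht2 : ∀ i : Fin 3, (T i).card ≤ 2 := by
          intro i
          rcases eq_or_ne i k with rfl | hi
          · rw [hTk]
            exact le_trans (Finset.card_union_le _ _)
              (by have := hsmallL (i+1); have := hsmallL (i+2); omega)
          · rw [hTj i hi]; simp
        have htne : ∀ i : Fin 3, (T i).Nonempty → i = k := by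
          intro i hi
          by_contra hik
          rw [hTj i hik] at hi
          exact absurd hi Finset.not_nonempty_empty
        have hTU : Finset.univ.biUnion T = L 0 ∪ L 1 ∪ L 2 := by
          ext x
          simp only [Finset.mem_biUnion, Finset.mem_univ, true_and]
          constructor
          · rintro ⟨i, hi⟩
            rcases eq_or_ne i k with rfl | hik
            · rw [hTk] at hi
              rcases Finset.mem_union.mp hi with h | h
              · exact hLin _ x h
              · exact hLin _ x h
            · rw [hTj i hik] at hi; exact absurd hi (Finset.notMem_empty x)
          · intro hx
            obtain ⟨m, hm⟩ := hLex x hx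
            rcases trich k m with h | h | h
            · rw [h, hk] at hm; exact absurd hm (Finset.notMem_empty x)
            · rw [h] at hm; exact ⟨k, by rw [hTk]; exact Finset.mem_union_left _ hm⟩
            · rw [h] at hm; exact ⟨k, by rw [hTk]; exact Finset.mem_union_right _ hm⟩
        set n : Fin 3 → ℕ := fun j => if j = k then q else q + 1 with hn
        have hnk : n k = q := by rw [hn]; simp
        have hnj : ∀ j : Fin 3, j ≠ k → n j = q + 1 := by
          intro j hj; rw [hn]; simp [hj]
        have hsum : n 0 + n 1 + n 2 = Big.card := by
          rcases f30 k with rfl | rfl | rfl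
          · rw [hnk, hnj 1 (by decide), hnj 2 (by decide)]; omega
          · rw [hnk, hnj 0 (by decide), hnj 2 (by decide)]; omega
          · rw [hnk, hnj 0 (by decide), hnj 1 (by decide)]; omega
        have H2 : ∀ i j : Fin 3, i ≠ j → n i ≤ n j + 1 := by
          intro i j hij
          rcases eq_or_ne i k with h | h
          · have hjk : j ≠ k := fun hj => hij (h.trans hj.symm)
            rw [h, hnk, hnj j hjk]; omega
          · rcases eq_or_ne j k with h' | h'
            · rw [hnj i h, h', hnk]
            · rw [hnj i h, hnj j h']; omega
        have H3 : ∀ i j : Fin 3, i ≠ j → (T i).Nonempty →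
            (n i ≤ n j ∨ (1:ℝ) ≤ ∑ e ∈ T j, c i e) := by
          intro i j hij hne
          left
          have hik := htne i hne
          rw [hik, hnk, hnj j (fun hj => hij (hik.trans hj.symm))]
          omega
        have H4 : ∀ i j : Fin 3, i ≠ j → (T i).card = 2 →
            (n i + 1 ≤ n j ∨ (n i ≤ n j ∧ (1:ℝ) ≤ ∑ e ∈ T j, c i e)) := by
          intro i j hij h2
          left
          have hik : i = k := htne i (Finset.card_pos.mp (by omega))
          rw [hik, hnk, hnj j (fun hj => hij (hik.trans hj.symm))]
        obtain ⟨X, hXd, hXu, hXm, hXe⟩ := base_glue c ε hε0 hε1 Big T n hsum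
          hBig1 hTown hTlb hTB hTT
          (key_master c ε hε0 hε1 T n hw ht2 H2 H3 H4)
        exact ⟨X, hXd, by rw [hXu, hTU], hXm, hXe⟩
    · -- all three L i are nonempty
      push_neg at hfree
      have hLne : ∀ m : Fin 3, (L m).Nonempty :=
        fun m => hfree m
      have hLsum1 : ∀ m : Fin 3, (1:ℝ) ≤ ∑ e ∈ L m, c m e := by
        intro m
        obtain ⟨x, hx⟩ := Finset.card_eq_one.mp
          (le_antisymm (hsmallL m) (Finset.card_pos.mpr (hLne m)))
        rw [hx, Finset.sum_singleton,
          hLown m x (by rw [hx]; exact Finset.mem_singleton_self x)]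
      have hLsumNN : ∀ (i m : Fin 3), (0:ℝ) ≤ ∑ e ∈ L m, c i e :=
        fun i m => Finset.sum_nonneg fun e he => le_trans hε0 (hlb i e (hLsub m he))
      rcases (by omega : Big.card % 3 = 0 ∨ Big.card % 3 = 1 ∨ Big.card % 3 = 2)
        with hr | hr | hr
      · -- r = 0 : T i = L (i + 2)
        set T : Fin 3 → Finset ι := fun j => L (j + 2) with hT
        have hTown : ∀ i : Fin 3, ∀ e ∈ T i, c i e = ε :=
          fun i e he => hLoth (i+2) i (hne2 i) e he
        have hTlb : ∀ i j : Fin 3, ∀ e ∈ T j, ε ≤ c i e :=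
          fun i j e he => hlb i e (hLsub (j+2) he)
        have hTB : ∀ j : Fin 3, Disjoint (T j) Big := fun j => hBigL (j+2)
        have hTT : ∀ i j : Fin 3, i ≠ j → Disjoint (T i) (T j) :=
          fun i j hij => hLL _ _ (fun h => hij (inj2 i j h))
        have hw : ∀ i j : Fin 3, (0:ℝ) ≤ ∑ e ∈ T j, c i e := fun i j => hLsumNN i (j+2)
        have ht1 : ∀ i : Fin 3, (T i).card ≤ 1 := fun i => hsmallL (i+2)
        have hTU : Finset.univ.biUnion T = L 0 ∪ L 1 ∪ L 2 := by
          ext x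
          simp only [Finset.mem_biUnion, Finset.mem_univ, true_and]
          constructor
          · rintro ⟨i, hi⟩
            exact hLin _ x hi
          · intro hx
            obtain ⟨m, hm⟩ := hLex x hx
            exact ⟨m + 1, by show x ∈ L (m + 1 + 2); rw [add12 m]; exact hm⟩
        obtain ⟨X, hXd, hXu, hXm, hXe⟩ := base_glue c ε hε0 hε1 Big T (fun _ => q)
          (by show q + q + q = Big.card; omega)
          hBig1 hTown hTlb hTB hTT
          (key_master c ε hε0 hε1 T (fun _ => q) hw
            (fun i => le_trans (ht1 i) (by norm_num))
            (fun i j _ => by show q ≤ q + 1; omega)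
            (fun i j _ _ => Or.inl (le_refl _))
            (fun i j _ h2 => absurd h2 (by have := ht1 i; omega)))
        exact ⟨X, hXd, by rw [hXu, hTU], hXm, hXe⟩
      · -- r = 1 : agent 0 heavy, T 1 = L 2 ∪ L 0, T 2 = L 1
        set T : Fin 3 → Finset ι :=
          fun j => if j = 1 then L 2 ∪ L 0 else if j = 2 then L 1 else ∅ with hT
        have hT0 : T 0 = ∅ := by
          rw [hT]; simp [(by decide : ¬ (0:Fin 3) = 1), (by decide : ¬ (0:Fin 3) = 2)]
        have hT1 : T 1 = L 2 ∪ L 0 := by rw [hT]; simp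
        have hT2 : T 2 = L 1 := by rw [hT]; simp [(by decide : ¬ (2:Fin 3) = 1)]
        have hTown : ∀ i : Fin 3, ∀ e ∈ T i, c i e = ε := by
          intro i e he
          rcases f30 i with rfl | rfl | rfl
          · rw [hT0] at he; exact absurd he (Finset.notMem_empty e)
          · rw [hT1] at he
            rcases Finset.mem_union.mp he with h | h
            · exact hLoth 2 1 (by decide) e h
            · exact hLoth 0 1 (by decide) e h
          · rw [hT2] at he; exact hLoth 1 2 (by decide) e he
        have hTsubM : ∀ j : Fin 3, T j ⊆ M := by
          intro j
          rcases f30 j with rfl | rfl | rfl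
          · rw [hT0]; exact Finset.empty_subset _
          · rw [hT1]; exact Finset.union_subset (hLsub 2) (hLsub 0)
          · rw [hT2]; exact hLsub 1
        have hTlb : ∀ i j : Fin 3, ∀ e ∈ T j, ε ≤ c i e :=
          fun i j e he => hlb i e (hTsubM j he)
        have hTB : ∀ j : Fin 3, Disjoint (T j) Big := by
          intro j
          rcases f30 j with rfl | rfl | rfl
          · rw [hT0]; exact Finset.disjoint_empty_left _
          · rw [hT1]; exact Finset.disjoint_union_left.mpr ⟨hBigL 2, hBigL 0⟩
          · rw [hT2]; exact hBigL 1
        have hTT : ∀ i j : Fin 3, i ≠ j → Disjoint (T i) (T j) := by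
          intro i j hij
          rcases f30 i with rfl | rfl | rfl <;> rcases f30 j with rfl | rfl | rfl <;>
            first
            | exact absurd rfl hij
            | (rw [hT0]; exact Finset.disjoint_empty_left _)
            | (rw [hT0]; exact Finset.disjoint_empty_right _)
            | (rw [hT1, hT2]
               exact Finset.disjoint_union_left.mpr
                 ⟨hLL 2 1 (by decide), hLL 0 1 (by decide)⟩)
            | (rw [hT2, hT1]
               exact Finset.disjoint_union_right.mpr
                 ⟨hLL 1 2 (by decide), hLL 1 0 (by decide)⟩)
        have hw : ∀ i j : Fin 3, (0:ℝ) ≤ ∑ e ∈ T j, c i e :=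
          fun i j => Finset.sum_nonneg fun e he => le_trans hε0 (hTlb i j e he)
        have ht2 : ∀ i : Fin 3, (T i).card ≤ 2 := by
          intro i
          rcases f30 i with rfl | rfl | rfl
          · rw [hT0]; simp
          · rw [hT1]
            exact le_trans (Finset.card_union_le _ _)
              (by have := hsmallL 2; have := hsmallL 0; omega)
          · rw [hT2]; exact le_trans (hsmallL 1) (by norm_num)
        set n : Fin 3 → ℕ := fun j => if j = 0 then q + 1 else q with hn
        have hn0 : n 0 = q + 1 := by rw [hn]; simp
        have hn1 : n 1 = q := by rw [hn]; simp [(by decide : ¬ (1:Fin 3) = 0)]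
        have hn2 : n 2 = q := by rw [hn]; simp [(by decide : ¬ (2:Fin 3) = 0)]
        have hsum : n 0 + n 1 + n 2 = Big.card := by rw [hn0, hn1, hn2]; omega
        have H2 : ∀ i j : Fin 3, i ≠ j → n i ≤ n j + 1 := by
          intro i j hij
          rcases f30 i with rfl | rfl | rfl <;> rcases f30 j with rfl | rfl | rfl <;>
            simp only [hn0, hn1, hn2] <;> omega
        have H3 : ∀ i j : Fin 3, i ≠ j → (T i).Nonempty →
            (n i ≤ n j ∨ (1:ℝ) ≤ ∑ e ∈ T j, c i e) := by
          intro i j hij hne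
          rcases f30 i with rfl | rfl | rfl
          · rw [hT0] at hne; exact absurd hne Finset.not_nonempty_empty
          · left
            rcases f30 j with rfl | rfl | rfl
            · rw [hn1, hn0]; omega
            · exact absurd rfl hij
            · rw [hn1, hn2]
          · left
            rcases f30 j with rfl | rfl | rfl
            · rw [hn2, hn0]; omega
            · rw [hn2, hn1]
            · exact absurd rfl hij
        have H4 : ∀ i j : Fin 3, i ≠ j → (T i).card = 2 →
            (n i + 1 ≤ n j ∨ (n i ≤ n j ∧ (1:ℝ) ≤ ∑ e ∈ T j, c i e)) := by
          intro i j hij h2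
          rcases f30 i with rfl | rfl | rfl
          · rw [hT0] at h2; simp at h2
          · rcases f30 j with rfl | rfl | rfl
            · left; rw [hn1, hn0]
            · exact absurd rfl hij
            · right
              constructor
              · rw [hn1, hn2]
              · rw [hT2]; exact hLsum1 1
          · rw [hT2] at h2
            have := hsmallL 1; omega
        obtain ⟨X, hXd, hXu, hXm, hXe⟩ := base_glue c ε hε0 hε1 Big T n hsum
          hBig1 hTown hTlb hTB hTT
          (key_master c ε hε0 hε1 T n hw ht2 H2 H3 H4)
        refine ⟨X, hXd, ?_, hXm, hXe⟩
        rw [hXu]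
        congr 1
        ext x
        simp only [Finset.mem_biUnion, Finset.mem_univ, true_and]
        constructor
        · rintro ⟨i, hi⟩
          rcases f30 i with rfl | rfl | rfl
          · rw [hT0] at hi; exact absurd hi (Finset.notMem_empty x)
          · rw [hT1] at hi
            rcases Finset.mem_union.mp hi with h | h
            · exact hLin 2 x h
            · exact hLin 0 x h
          · rw [hT2] at hi; exact hLin 1 x hi
        · intro hx
          obtain ⟨m, hm⟩ := hLex x hx
          rcases f30 m with rfl | rfl | rfl
          · exact ⟨1, by rw [hT1]; exact Finset.mem_union_right _ hm⟩
          · exact ⟨2, by rw [hT2]; exact hm⟩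
          · exact ⟨1, by rw [hT1]; exact Finset.mem_union_left _ hm⟩
      · -- r = 2 : agent 0 light, T 0 = L 1 ∪ L 2, T 1 = L 0
        set T : Fin 3 → Finset ι :=
          fun j => if j = 0 then L 1 ∪ L 2 else if j = 1 then L 0 else ∅ with hT
        have hT0 : T 0 = L 1 ∪ L 2 := by rw [hT]; simp
        have hT1 : T 1 = L 0 := by
          rw [hT]; simp [(by decide : ¬ (1:Fin 3) = 0)]
        have hT2 : T 2 = ∅ := by
          rw [hT]; simp [(by decide : ¬ (2:Fin 3) = 0), (by decide : ¬ (2:Fin 3) = 1)]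
        have hTown : ∀ i : Fin 3, ∀ e ∈ T i, c i e = ε := by
          intro i e he
          rcases f30 i with rfl | rfl | rfl
          · rw [hT0] at he
            rcases Finset.mem_union.mp he with h | h
            · exact hLoth 1 0 (by decide) e h
            · exact hLoth 2 0 (by decide) e h
          · rw [hT1] at he; exact hLoth 0 1 (by decide) e he
          · rw [hT2] at he; exact absurd he (Finset.notMem_empty e)
        have hTsubM : ∀ j : Fin 3, T j ⊆ M := by
          intro j
          rcases f30 j with rfl | rfl | rfl
          · rw [hT0]; exact Finset.union_subset (hLsub 1) (hLsub 2)
          · rw [hT1]; exact hLsub 0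
          · rw [hT2]; exact Finset.empty_subset _
        have hTlb : ∀ i j : Fin 3, ∀ e ∈ T j, ε ≤ c i e :=
          fun i j e he => hlb i e (hTsubM j he)
        have hTB : ∀ j : Fin 3, Disjoint (T j) Big := by
          intro j
          rcases f30 j with rfl | rfl | rfl
          · rw [hT0]; exact Finset.disjoint_union_left.mpr ⟨hBigL 1, hBigL 2⟩
          · rw [hT1]; exact hBigL 0
          · rw [hT2]; exact Finset.disjoint_empty_left _
        have hTT : ∀ i j : Fin 3, i ≠ j → Disjoint (T i) (T j) := by
          intro i j hij
          rcases f30 i with rfl | rfl | rfl <;> rcases f30 j with rfl | rfl | rfl <;>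
            first
            | exact absurd rfl hij
            | (rw [hT2]; exact Finset.disjoint_empty_left _)
            | (rw [hT2]; exact Finset.disjoint_empty_right _)
            | (rw [hT0, hT1]
               exact Finset.disjoint_union_left.mpr
                 ⟨hLL 1 0 (by decide), hLL 2 0 (by decide)⟩)
            | (rw [hT1, hT0]
               exact Finset.disjoint_union_right.mpr
                 ⟨hLL 0 1 (by decide), hLL 0 2 (by decide)⟩)
        have hw : ∀ i j : Fin 3, (0:ℝ) ≤ ∑ e ∈ T j, c i e :=
          fun i j => Finset.sum_nonneg fun e he => le_trans hε0 (hTlb i j e he)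
        have ht2 : ∀ i : Fin 3, (T i).card ≤ 2 := by
          intro i
          rcases f30 i with rfl | rfl | rfl
          · rw [hT0]
            exact le_trans (Finset.card_union_le _ _)
              (by have := hsmallL 1; have := hsmallL 2; omega)
          · rw [hT1]; exact le_trans (hsmallL 0) (by norm_num)
          · rw [hT2]; simp
        set n : Fin 3 → ℕ := fun j => if j = 0 then q else q + 1 with hn
        have hn0 : n 0 = q := by rw [hn]; simp
        have hn1 : n 1 = q + 1 := by rw [hn]; simp [(by decide : ¬ (1:Fin 3) = 0)]
        have hn2 : n 2 = q + 1 := by rw [hn]; simp [(by decide : ¬ (2:Fin 3) = 0)]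
        have hsum : n 0 + n 1 + n 2 = Big.card := by rw [hn0, hn1, hn2]; omega
        have H2 : ∀ i j : Fin 3, i ≠ j → n i ≤ n j + 1 := by
          intro i j hij
          rcases f30 i with rfl | rfl | rfl <;> rcases f30 j with rfl | rfl | rfl <;>
            simp only [hn0, hn1, hn2] <;> omega
        have H3 : ∀ i j : Fin 3, i ≠ j → (T i).Nonempty →
            (n i ≤ n j ∨ (1:ℝ) ≤ ∑ e ∈ T j, c i e) := by
          intro i j hij hne
          rcases f30 i with rfl | rfl | rfl
          · left
            rcases f30 j with rfl | rfl | rfl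
            · exact absurd rfl hij
            · rw [hn0, hn1]; omega
            · rw [hn0, hn2]; omega
          · rcases f30 j with rfl | rfl | rfl
            · right
              rw [hT0, Finset.sum_union (hLL 1 2 (by decide))]
              have := hLsum1 1
              have := hLsumNN 1 2
              linarith
            · exact absurd rfl hij
            · left; rw [hn1, hn2]
          · rw [hT2] at hne; exact absurd hne Finset.not_nonempty_empty
        have H4 : ∀ i j : Fin 3, i ≠ j → (T i).card = 2 →
            (n i + 1 ≤ n j ∨ (n i ≤ n j ∧ (1:ℝ) ≤ ∑ e ∈ T j, c i e)) := by
          intro i j hij h2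
          rcases f30 i with rfl | rfl | rfl
          · left
            rcases f30 j with rfl | rfl | rfl
            · exact absurd rfl hij
            · rw [hn0, hn1]
            · rw [hn0, hn2]
          · rw [hT1] at h2; have := hsmallL 0; omega
          · rw [hT2] at h2; simp at h2
        obtain ⟨X, hXd, hXu, hXm, hXe⟩ := base_glue c ε hε0 hε1 Big T n hsum
          hBig1 hTown hTlb hTB hTT
          (key_master c ε hε0 hε1 T n hw ht2 H2 H3 H4)
        refine ⟨X, hXd, ?_, hXm, hXe⟩
        rw [hXu]
        congr 1
        ext x
        simp only [Finset.mem_biUnion, Finset.mem_univ, true_and]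
        constructor
        · rintro ⟨i, hi⟩
          rcases f30 i with rfl | rfl | rfl
          · rw [hT0] at hi
            rcases Finset.mem_union.mp hi with h | h
            · exact hLin 1 x h
            · exact hLin 2 x h
          · rw [hT1] at hi; exact hLin 0 x hi
          · rw [hT2] at hi; exact absurd hi (Finset.notMem_empty x)
        · intro hx
          obtain ⟨m, hm⟩ := hLex x hx
          rcases f30 m with rfl | rfl | rfl
          · exact ⟨1, by rw [hT1]; exact hm⟩
          · exact ⟨0, by rw [hT0]; exact Finset.mem_union_left _ hm⟩
          · exact ⟨0, by rw [hT0]; exact Finset.mem_union_right _ hm⟩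
  obtain ⟨X, hXdisj, hXU, hXmin, hXEFX⟩ := hbase
  have hXsubM : ∀ i : Fin 3, X i ⊆ M := by
    intro i x hx
    have hx' : x ∈ Finset.univ.biUnion X := Finset.mem_biUnion.mpr ⟨i, Finset.mem_univ i, hx⟩
    rw [hXU] at hx'
    rcases Finset.mem_union.mp hx' with h | h
    · exact hBigM h
    · obtain ⟨m, hm⟩ := hLex x h
      exact hLsub m hm
  have hSmX : ∀ i : Fin 3, Disjoint Sm (X i) := by
    intro i
    rw [Finset.disjoint_right]
    intro x hxX hxS
    have hx' : x ∈ Finset.univ.biUnion X := Finset.mem_biUnion.mpr ⟨i, Finset.mem_univ i, hxX⟩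
    rw [hXU] at hx'
    rcases Finset.mem_union.mp hx' with h | h
    · exact Finset.disjoint_left.mp hSmBig hxS h
    · obtain ⟨m, hm⟩ := hLex x h
      exact Finset.disjoint_right.mp (hSmL m) hxS hm
  obtain ⟨X', h1, h2, h3⟩ := add_smalls c ε hε0 Sm X hSmall hXdisj hSmX
    (fun i j e he => hlb i e (hXsubM j he)) hXmin hXEFX
  refine ⟨X', h1, ?_, h3⟩
  rw [h2, hXU]
  exact hMdecomp
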